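/- arXiv:1604.07139 — 3 statements merged into one kernel-verified Lean document; each statement's English description precedes it below -/
import Mathlib

section
/- Let n ≥ 1 and let p_i, q_i, r_i > 0 for i = 1,…,n. Define B : [0,1]^n → ℝ^n by B_i(α) = (p_i + 2 r_i (1 + S_i)) / (2[p_i + q_i + r_i + (q_i + r_i) S_i]) where S_i = Σ_{j≠i} α_j. Then B is continuous, maps [0,1]^n into [0,1]^n (indeed each coordinate lies in (0,1)), and has a fixed point α* ∈ [0,1]^n, i.e., α*_i = B_i(α*) for all i. Hence a Nash equilibrium of the static social trust game exists. -/
/-- Unique positive root of `2(q+r)t² + (2p+2r-2(q+r)(1+T))t - p(1+2T) = 0`. -/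
noncomputable def stgT (p q r T : ℝ) : ℝ :=
  (-(2*p + 2*r - 2*(q+r)*(1+T)) +
    Real.sqrt ((2*p + 2*r - 2*(q+r)*(1+T))^2 + 8*(q+r)*p*(1+2*T))) / (4*(q+r))

lemma stgT_pos (p q r T : ℝ) (hp : 0 < p) (hq : 0 < q) (hr : 0 < r) (hT : 0 ≤ T) :
    0 < stgT p q r T := by
  have hc : 0 < q + r := by linarith
  have hd : (2*p + 2*r - 2*(q+r)*(1+T))^2 < (2*p + 2*r - 2*(q+r)*(1+T))^2 + 8*(q+r)*p*(1+2*T) := by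
    have : 0 < 8*(q+r)*p*(1+2*T) := by positivity
    linarith
  have h1 : 2*p + 2*r - 2*(q+r)*(1+T) < Real.sqrt ((2*p + 2*r - 2*(q+r)*(1+T))^2 + 8*(q+r)*p*(1+2*T)) := by
    calc 2*p + 2*r - 2*(q+r)*(1+T) ≤ |2*p + 2*r - 2*(q+r)*(1+T)| := le_abs_self _
    _ = Real.sqrt ((2*p + 2*r - 2*(q+r)*(1+T))^2) := (Real.sqrt_sq_eq_abs _).symm
    _ < _ := Real.sqrt_lt_sqrt (sq_nonneg _) hd
  have : 0 < -(2*p + 2*r - 2*(q+r)*(1+T)) +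
      Real.sqrt ((2*p + 2*r - 2*(q+r)*(1+T))^2 + 8*(q+r)*p*(1+2*T)) := by linarith
  exact div_pos this (by linarith)

lemma stgT_quad (p q r T : ℝ) (hp : 0 < p) (hq : 0 < q) (hr : 0 < r) (hT : 0 ≤ T) :
    2*(q+r)*(stgT p q r T)^2 + (2*p + 2*r - 2*(q+r)*(1+T))*(stgT p q r T) - p*(1+2*T) = 0 := by
  have hc : 0 < q + r := by linarith
  have hd : 0 ≤ (2*p + 2*r - 2*(q+r)*(1+T))^2 + 8*(q+r)*p*(1+2*T) := by
    have : 0 < 8*(q+r)*p*(1+2*T) := by positivity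
    positivity
  have hs := Real.sq_sqrt hd
  set s := Real.sqrt ((2*p + 2*r - 2*(q+r)*(1+T))^2 + 8*(q+r)*p*(1+2*T)) with hsdef
  unfold stgT
  rw [← hsdef]
  field_simp
  nlinarith [hs]

lemma stgA_eq (p q r T : ℝ) (hp : 0 < p) (hq : 0 < q) (hr : 0 < r) (hT : 0 ≤ T) :
    (1 + T - stgT p q r T) * (2*(p + (q+r)*(stgT p q r T))) = p + 2*r*(stgT p q r T) := by
  have h := stgT_quad p q r T hp hq hr hT
  linear_combination -h

lemma stgA_mem (p q r T : ℝ) (hp : 0 < p) (hq : 0 < q) (hr : 0 < r) (hT : 0 ≤ T) :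
    0 < 1 + T - stgT p q r T ∧ 1 + T - stgT p q r T < 1 := by
  have ht := stgT_pos p q r T hp hq hr hT
  have heq := stgA_eq p q r T hp hq hr hT
  have hden : 0 < 2*(p + (q+r)*(stgT p q r T)) := by nlinarith
  constructor
  · have hnum : 0 < p + 2*r*(stgT p q r T) := by nlinarith
    nlinarith
  · nlinarith

lemma stgT_continuous (p q r : ℝ) : Continuous (fun T : ℝ => stgT p q r T) := by
  unfold stgT
  fun_prop

/-- Existence of a Nash equilibrium in the static social trust game: the
best-response map `B_i(α) = (p_i + 2r_i(1+S_i)) / (2[p_i+q_i+r_i+(q_i+r_i)S_i])`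
with `S_i = Σ_{j≠i} α_j` is continuous on the cube `[0,1]ⁿ`, maps the cube
into itself (each coordinate lying in `(0,1)`), and has a fixed point in the
cube, i.e., a Nash equilibrium exists. -/
theorem static_social_trust_game_nash_exists
    (n : ℕ) (hn : 1 ≤ n) (p q r : Fin n → ℝ)
    (hp : ∀ i, 0 < p i) (hq : ∀ i, 0 < q i) (hr : ∀ i, 0 < r i) :
    let S : (Fin n → ℝ) → Fin n → ℝ := fun α i => ∑ j ∈ Finset.univ.erase i, α j
    let B : (Fin n → ℝ) → Fin n → ℝ := fun α i =>
      (p i + 2 * r i * (1 + S α i)) /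
        (2 * (p i + q i + r i + (q i + r i) * S α i))
    ContinuousOn B (Set.Icc (0 : Fin n → ℝ) 1) ∧
    (∀ α ∈ Set.Icc (0 : Fin n → ℝ) 1, ∀ i, B α i ∈ Set.Ioo (0 : ℝ) 1) ∧
    (∃ αstar ∈ Set.Icc (0 : Fin n → ℝ) 1, ∀ i, αstar i = B αstar i) := by
  intro S B
  -- nonnegativity of S on the cube
  have hS0 : ∀ α ∈ Set.Icc (0 : Fin n → ℝ) 1, ∀ i, 0 ≤ S α i := by
    intro α hα i
    exact Finset.sum_nonneg fun j _ => hα.1 j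
  have hden : ∀ α ∈ Set.Icc (0 : Fin n → ℝ) 1, ∀ i,
      0 < 2 * (p i + q i + r i + (q i + r i) * S α i) := by
    intro α hα i
    have := hS0 α hα i
    nlinarith [hp i, hq i, hr i]
  have hScont : ∀ i, Continuous (fun α : Fin n → ℝ => S α i) := by
    intro i
    exact continuous_finset_sum _ fun j _ => continuous_apply j
  refine ⟨?_, ?_, ?_⟩
  · -- continuity
    rw [continuousOn_pi]
    intro i
    apply ContinuousOn.div
    · exact (Continuous.continuousOn (by continuity))
    · exact (Continuous.continuousOn (by continuity))
    · intro α hα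
      exact ne_of_gt (hden α hα i)
  · -- range in (0,1)
    intro α hα i
    have hS := hS0 α hα i
    have hd := hden α hα i
    constructor
    · apply div_pos
      · nlinarith [hp i, hr i]
      · exact hd
    · rw [div_lt_one hd]
      nlinarith [hp i, hq i, hS]
  · -- fixed point
    set g : Fin n → ℝ → ℝ := fun i T => 1 + T - stgT (p i) (q i) (r i) T with hg
    have hgmem : ∀ i, ∀ T : ℝ, 0 ≤ T → 0 < g i T ∧ g i T < 1 := fun i T hT =>
      stgA_mem (p i) (q i) (r i) T (hp i) (hq i) (hr i) hT
    set k : ℝ → ℝ := fun T => (∑ i, g i T) - T with hk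
    have hkcont : Continuous k := by
      apply Continuous.sub _ continuous_id
      exact continuous_finset_sum _ fun i _ =>
        (continuous_const.add continuous_id).sub (stgT_continuous (p i) (q i) (r i))
    have hne : (Finset.univ : Finset (Fin n)).Nonempty := ⟨⟨0, hn⟩, Finset.mem_univ _⟩
    have hk0 : 0 < k 0 := by
      simp only [hk, sub_zero]
      exact Finset.sum_pos (fun i _ => (hgmem i 0 le_rfl).1) hne
    have hkn : k n < 0 := by
      have : (∑ i, g i n) < ∑ i : Fin n, (1 : ℝ) :=
        Finset.sum_lt_sum_of_nonempty hne
          (fun i _ => (hgmem i n (by positivity)).2)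
      simp only [hk]
      simp only [Finset.sum_const, Finset.card_univ, Fintype.card_fin, nsmul_eq_mul, mul_one] at this
      linarith
    have hivt : (0 : ℝ) ∈ Set.Icc (k n) (k 0) := ⟨hkn.le, hk0.le⟩
    obtain ⟨T, hT, hkT⟩ := intermediate_value_Icc' (by positivity : (0:ℝ) ≤ (n:ℝ)) hkcont.continuousOn hivt
    have hT0 : 0 ≤ T := hT.1
    have hsum : (∑ i, g i T) = T := by
      have : (∑ i, g i T) - T = 0 := hkT
      linarith
    refine ⟨fun i => g i T, ?_, ?_⟩
    · constructor
      · intro i; exact (hgmem i T hT0).1.le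
      · intro i; exact (hgmem i T hT0).2.le
    · intro i
      have hSi : S (fun j => g j T) i = T - g i T := by
        simp only [S]
        rw [Finset.sum_erase_eq_sub (Finset.mem_univ i), hsum]
      show g i T = _
      simp only [B]
      rw [hSi]
      set t := stgT (p i) (q i) (r i) T with ht
      have htpos := stgT_pos (p i) (q i) (r i) T (hp i) (hq i) (hr i) hT0
      have h1 : 1 + (T - g i T) = t := by simp only [hg, ht]; ring
      have h2 : p i + q i + r i + (q i + r i) * (T - g i T) = p i + (q i + r i) * t := by
        have : T - g i T = t - 1 := by simp only [hg, ht]; ring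
        rw [this]; ring
      rw [h1, h2]
      rw [eq_div_iff (by nlinarith [hp i, hq i, hr i])]
      have := stgA_eq (p i) (q i) (r i) T (hp i) (hq i) (hr i) hT0
      simp only [hg]
      linarith [this]
end

section
/- Let p, q, r > 0, S ≥ 0, and let α, x ∈ ℝ satisfy the steady-state stationarity relation α = [p(1 − 2 S x − 2x) + 2r(1 + S)] / (2(q + r)(1 + S)) together with the steady-state condition x = α/(1 + S). Then α = (p + 2r(1 + S)) / (2[p + q + r + (q + r)S]); i.e., at the open-loop equilibrium in steady state, the dynamic best response of a malicious node coincides with its static best response. -/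
/-- Dynamic multiple-malicious-node game at steady state: if
`α = [p(1 − 2Sx − 2x) + 2r(1+S)] / (2(q+r)(1+S))` (Pontryagin stationarity)
and `x = α/(1+S)` (steady state), then
`α = (p + 2r(1+S)) / (2[p + q + r + (q+r)S])`, i.e., the dynamic open-loop
equilibrium best response coincides with the static best response. -/
theorem multi_node_dynamic_steady_state_coincides_static
    (p q r S α x : ℝ) (hp : 0 < p) (hq : 0 < q) (hr : 0 < r) (hS : 0 ≤ S)
    (hstat : α = (p * (1 - 2 * S * x - 2 * x) + 2 * r * (1 + S)) /
      (2 * (q + r) * (1 + S)))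
    (hsteady : x = α / (1 + S)) :
    α = (p + 2 * r * (1 + S)) / (2 * (p + q + r + (q + r) * S)) := by
  have h1 : (0:ℝ) < 1 + S := by linarith
  have hqr : (0:ℝ) < q + r := by linarith
  have hd : (0:ℝ) < 2 * (p + q + r + (q + r) * S) := by positivity
  subst hsteady
  field_simp at hstat ⊢
  nlinarith [hstat, h1.ne', hqr.ne']
end

section
/- Let p, q, r > 0. There exists a unique α ∈ (0,1) satisfying the symmetric equilibrium equation α = (p + 2r(1 + α)) / (2[p + q + r + (q + r)α]); equivalently, the quadratic 2(q + r)α² + 2(p + q)α − (p + 2r) has a unique root in (0,1). Hence the static social trust game between two symmetric malicious nodes has a unique symmetric Nash equilibrium, which is interior. -/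
/-- The static social trust game between two symmetric malicious nodes has a
unique symmetric Nash equilibrium, which is interior: there is a unique
`α ∈ (0,1)` with `α = (p + 2r(1+α)) / (2[p + q + r + (q+r)α])`; equivalently,
the quadratic `2(q+r)α² + 2(p+q)α − (p+2r)` has a unique root in `(0,1)`. -/
theorem symmetric_two_player_unique_equilibrium
    (p q r : ℝ) (hp : 0 < p) (hq : 0 < q) (hr : 0 < r) :
    (∃! α : ℝ, α ∈ Set.Ioo (0 : ℝ) 1 ∧
      α = (p + 2 * r * (1 + α)) / (2 * (p + q + r + (q + r) * α))) ∧
    (∃! α : ℝ, α ∈ Set.Ioo (0 : ℝ) 1 ∧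
      2 * (q + r) * α ^ 2 + 2 * (p + q) * α - (p + 2 * r) = 0) := by
  set D : ℝ := (p + q) ^ 2 + 2 * (q + r) * (p + 2 * r) with hD
  have hDpos : 0 < D := by nlinarith
  set s : ℝ := Real.sqrt D with hs
  have hs2 : s ^ 2 = D := Real.sq_sqrt hDpos.le
  have hsnn : 0 ≤ s := Real.sqrt_nonneg _
  have hsgt : p + q < s := by nlinarith
  have hslt : s < p + q + 2 * (q + r) := by nlinarith
  set a : ℝ := (s - (p + q)) / (2 * (q + r)) with ha
  have hqr : 0 < 2 * (q + r) := by linarith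
  have ha0 : 0 < a := div_pos (by linarith) hqr
  have ha1 : a < 1 := by
    rw [ha, div_lt_one hqr]; linarith
  have haroot : 2 * (q + r) * a ^ 2 + 2 * (p + q) * a - (p + 2 * r) = 0 := by
    rw [ha]; field_simp; nlinarith
  have hquad : ∃! α : ℝ, α ∈ Set.Ioo (0 : ℝ) 1 ∧
      2 * (q + r) * α ^ 2 + 2 * (p + q) * α - (p + 2 * r) = 0 := by
    refine ⟨a, ⟨⟨ha0, ha1⟩, haroot⟩, ?_⟩
    rintro b ⟨⟨hb0, hb1⟩, hbroot⟩
    nlinarith [mul_pos (mul_pos hqr hb0) ha0]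
  constructor
  · obtain ⟨α, ⟨hαm, hαe⟩, hαu⟩ := hquad
    have key : ∀ x : ℝ, x ∈ Set.Ioo (0 : ℝ) 1 →
        ((x = (p + 2 * r * (1 + x)) / (2 * (p + q + r + (q + r) * x))) ↔
         (2 * (q + r) * x ^ 2 + 2 * (p + q) * x - (p + 2 * r) = 0)) := by
      rintro x ⟨hx0, _⟩
      have hden : (2 * (p + q + r + (q + r) * x)) ≠ 0 := by positivity
      rw [eq_div_iff hden]
      constructor <;> intro h <;> nlinarith
    exact ⟨α, ⟨hαm, (key α hαm).2 hαe⟩,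
      fun b ⟨hbm, hbe⟩ => hαu b ⟨hbm, (key b hbm).1 hbe⟩⟩
  · exact hquad
end
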